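/- Let f(x) = (1/2)xᵀQx + qᵀx with Q symmetric positive definite, c(x) = Ax − b, and ω > 0, ρ > 0. Then the MALM dual iteration λ_k = λ_{k−1} − (c(x_k) + ωλ_{k−1})/(ω+ρ), where x_k minimizes Ψ_k(x) = f(x) − λ_{k−1}ᵀc(x) + (1/(2(ω+ρ)))‖c(x) + ωλ_{k−1}‖², is an affine map λ_k = Mλ_{k−1} + v in λ whose matrix is M = (ρ·I − A(Q + AᵀA/(ω+ρ))⁻¹Aᵀ·(ρ/(ω+ρ)))/(ω+ρ); in particular ‖M‖₂ ≤ ρ/(ω+ρ) < 1, so the iteration converges linearly to its unique fixed point from any λ_0. -/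

import Mathlib

open RealInnerProductSpace Filter Topology Matrix

namespace MALMAux

variable {k l : ℕ}

lemma dot_e (x y : EuclideanSpace ℝ (Fin k)) :
    ⟪x, y⟫ = (WithLp.equiv 2 (Fin k → ℝ) x) ⬝ᵥ (WithLp.equiv 2 (Fin k → ℝ) y) := by
  simp [PiLp.inner_apply, dotProduct, WithLp.equiv, mul_comm]

lemma norm_sq_e (x : EuclideanSpace ℝ (Fin k)) :
    ‖x‖ ^ 2 = (WithLp.equiv 2 (Fin k → ℝ) x) ⬝ᵥ (WithLp.equiv 2 (Fin k → ℝ) x) := by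
  rw [← real_inner_self_eq_norm_sq, dot_e]

lemma transpose_dot (A : Matrix (Fin k) (Fin l) ℝ) (z : Fin k → ℝ) (w : Fin l → ℝ) :
    (Aᵀ *ᵥ z) ⬝ᵥ w = z ⬝ᵥ (A *ᵥ w) := by
  rw [Matrix.mulVec_transpose, ← Matrix.dotProduct_mulVec]

lemma dot_self_nonneg (x : Fin k → ℝ) : 0 ≤ x ⬝ᵥ x :=
  Finset.sum_nonneg fun i _ => mul_self_nonneg _

lemma dot_CS (x y : Fin k → ℝ) : (x ⬝ᵥ y) ^ 2 ≤ (x ⬝ᵥ x) * (y ⬝ᵥ y) := by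
  have h := real_inner_mul_inner_self_le ((WithLp.equiv 2 (Fin k → ℝ)).symm x)
    ((WithLp.equiv 2 (Fin k → ℝ)).symm y)
  rw [dot_e, dot_e, dot_e] at h
  simpa [sq] using h

end MALMAux

namespace MALMAux2
open MALMAux
variable {k : ℕ}

lemma sym_dot (M : Matrix (Fin k) (Fin k) ℝ) (hsym : Mᵀ = M) (u w : Fin k → ℝ) :
    (M *ᵥ u) ⬝ᵥ w = u ⬝ᵥ (M *ᵥ w) := by
  nth_rewrite 1 [← hsym]; rw [transpose_dot]

lemma sym_dot' (M : Matrix (Fin k) (Fin k) ℝ) (hsym : Mᵀ = M) (u w : Fin k → ℝ) :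
    u ⬝ᵥ (M *ᵥ w) = w ⬝ᵥ (M *ᵥ u) := by
  rw [dotProduct_comm, sym_dot M hsym]

lemma sym_CS (M : Matrix (Fin k) (Fin k) ℝ) (hsym : Mᵀ = M)
    (h1 : ∀ x : Fin k → ℝ, 0 ≤ x ⬝ᵥ (M *ᵥ x)) (a b : Fin k → ℝ) :
    (a ⬝ᵥ (M *ᵥ b)) ^ 2 ≤ (a ⬝ᵥ (M *ᵥ a)) * (b ⬝ᵥ (M *ᵥ b)) := by
  have hq : ∀ t : ℝ, 0 ≤ (b ⬝ᵥ (M *ᵥ b)) * (t * t) + (2 * (a ⬝ᵥ (M *ᵥ b))) * t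
      + a ⬝ᵥ (M *ᵥ a) := by
    intro t
    have h0 := h1 (a + t • b)
    have hexp : (a + t • b) ⬝ᵥ (M *ᵥ (a + t • b)) =
        (b ⬝ᵥ (M *ᵥ b)) * (t * t) + (2 * (a ⬝ᵥ (M *ᵥ b))) * t + a ⬝ᵥ (M *ᵥ a) := by
      simp only [Matrix.mulVec_add, Matrix.mulVec_smul, add_dotProduct,
        smul_dotProduct, dotProduct_add, dotProduct_smul, smul_eq_mul]
      rw [sym_dot' M hsym b a]
      ring
    linarith [hexp ▸ h0]
  have hd := discrim_le_zero hq
  rw [discrim] at hd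
  nlinarith [hd]

lemma opnorm_le (M : Matrix (Fin k) (Fin k) ℝ) (hsym : Mᵀ = M) (C : ℝ) (hC : 0 ≤ C)
    (h1 : ∀ x : Fin k → ℝ, 0 ≤ x ⬝ᵥ (M *ᵥ x))
    (h2 : ∀ x : Fin k → ℝ, x ⬝ᵥ (M *ᵥ x) ≤ C * (x ⬝ᵥ x)) :
    ‖(Matrix.toEuclideanCLM (𝕜 := ℝ) M :
        EuclideanSpace ℝ (Fin k) →L[ℝ] EuclideanSpace ℝ (Fin k))‖ ≤ C := by
  refine ContinuousLinearMap.opNorm_le_bound _ hC fun x => ?_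
  set x' := WithLp.equiv 2 (Fin k → ℝ) x with hx'
  have hTx : Matrix.toEuclideanCLM (𝕜 := ℝ) M x = (WithLp.equiv 2 (Fin k → ℝ)).symm (M *ᵥ x') := by
    rfl
  rw [hTx]
  set w := M *ᵥ x' with hw
  have hw2 : ‖(WithLp.equiv 2 (Fin k → ℝ)).symm w‖ ^ 2 = w ⬝ᵥ w := by
    rw [norm_sq_e]; simp
  have hx2 : ‖x‖ ^ 2 = x' ⬝ᵥ x' := norm_sq_e x
  have hkey : (w ⬝ᵥ w) ^ 2 ≤ C ^ 2 * (x' ⬝ᵥ x') * (w ⬝ᵥ w) := by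
    have h3 : w ⬝ᵥ w = x' ⬝ᵥ (M *ᵥ w) := by
      calc w ⬝ᵥ w = (M *ᵥ x') ⬝ᵥ w := by rw [hw]
        _ = x' ⬝ᵥ (M *ᵥ w) := sym_dot M hsym x' w
    have h4 := sym_CS M hsym h1 x' w
    have h5 := h2 x'
    have h6 := h2 w
    have h7 := h1 x'
    have h8 := h1 w
    nlinarith [dot_self_nonneg x', dot_self_nonneg w]
  by_contra hcon
  push_neg at hcon
  have h9 : 0 ≤ C * ‖x‖ := by positivity
  have h10 := norm_nonneg ((WithLp.equiv 2 (Fin k → ℝ)).symm w)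
  have h11 := norm_nonneg x
  have hN1pos : 0 < ‖(WithLp.equiv 2 (Fin k → ℝ)).symm w‖ := lt_of_le_of_lt h9 hcon
  have h12 : C ^ 2 * ‖x‖ ^ 2 < ‖(WithLp.equiv 2 (Fin k → ℝ)).symm w‖ ^ 2 := by nlinarith
  have h13 : C ^ 2 * ‖x‖ ^ 2 * ‖(WithLp.equiv 2 (Fin k → ℝ)).symm w‖ ^ 2 <
      ‖(WithLp.equiv 2 (Fin k → ℝ)).symm w‖ ^ 2 * ‖(WithLp.equiv 2 (Fin k → ℝ)).symm w‖ ^ 2 :=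
    mul_lt_mul_of_pos_right h12 (by positivity)
  rw [← hw2, ← hx2] at hkey
  nlinarith [hkey, h13]

lemma contract_aux {k : ℕ} (M : Matrix (Fin k) (Fin k) ℝ) (C : ℝ) (hC0 : 0 ≤ C) (hC1 : C < 1)
    (hnorm : ‖(Matrix.toEuclideanCLM (𝕜 := ℝ) M :
        EuclideanSpace ℝ (Fin k) →L[ℝ] EuclideanSpace ℝ (Fin k))‖ ≤ C)
    (v : EuclideanSpace ℝ (Fin k)) :
    ∃! lamstar : EuclideanSpace ℝ (Fin k),
      lamstar = Matrix.toEuclideanCLM (𝕜 := ℝ) M lamstar + v ∧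
      ∀ lam0 : EuclideanSpace ℝ (Fin k),
        Filter.Tendsto (fun j => (fun l => Matrix.toEuclideanCLM (𝕜 := ℝ) M l + v)^[j] lam0)
          Filter.atTop (nhds lamstar) := by
  have hK : ((Real.toNNReal C : NNReal) : ℝ) = C := Real.coe_toNNReal _ hC0
  have hLip : LipschitzWith (Real.toNNReal C)
      (fun l => Matrix.toEuclideanCLM (𝕜 := ℝ) M l + v) := by
    refine LipschitzWith.of_dist_le_mul fun a a' => ?_
    have hsub : (Matrix.toEuclideanCLM (𝕜 := ℝ) M a + v)
        - (Matrix.toEuclideanCLM (𝕜 := ℝ) M a' + v)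
        = Matrix.toEuclideanCLM (𝕜 := ℝ) M (a - a') := by
      rw [map_sub]
      abel
    rw [dist_eq_norm, dist_eq_norm, hsub, hK]
    exact le_trans (ContinuousLinearMap.le_opNorm _ _)
      (mul_le_mul_of_nonneg_right hnorm (norm_nonneg _))
  have hCon : ContractingWith (Real.toNNReal C)
      (fun l => Matrix.toEuclideanCLM (𝕜 := ℝ) M l + v) := by
    refine ⟨?_, hLip⟩
    rw [← NNReal.coe_lt_coe, hK, NNReal.coe_one]
    exact hC1
  refine ⟨ContractingWith.fixedPoint _ hCon, ⟨?_, fun lam0 => ?_⟩, fun y hy => ?_⟩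
  · exact (hCon.fixedPoint_isFixedPt).symm
  · exact hCon.tendsto_iterate_fixedPoint lam0
  · exact hCon.fixedPoint_unique (hy.1.symm)

end MALMAux2

section
open MALMAux MALMAux2

theorem malm_quadratic_linear_convergence
    (n m : ℕ)
    (Q : Matrix (Fin n) (Fin n) ℝ) (hQsym : Q.IsSymm) (hQpd : Q.PosDef)
    (q : EuclideanSpace ℝ (Fin n))
    (A : Matrix (Fin m) (Fin n) ℝ) (b : EuclideanSpace ℝ (Fin m))
    (ω ρ : ℝ) (hω : 0 < ω) (hρ : 0 < ρ)
    (f : EuclideanSpace ℝ (Fin n) → ℝ)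
    (hf : ∀ x, f x = (1 / 2) * ⟪x, Matrix.toEuclideanLin Q x⟫ + ⟪q, x⟫)
    (c : EuclideanSpace ℝ (Fin n) → EuclideanSpace ℝ (Fin m))
    (hc : ∀ x, c x = Matrix.toEuclideanLin A x - b)
    (Ψ : EuclideanSpace ℝ (Fin m) → EuclideanSpace ℝ (Fin n) → ℝ)
    (hΨ : ∀ lam x, Ψ lam x =
      f x - ⟪lam, c x⟫ + (1 / (2 * (ω + ρ))) * ‖c x + ω • lam‖ ^ 2)
    (M : Matrix (Fin m) (Fin m) ℝ)
    (hM : M = ((ω + ρ)⁻¹) •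
      (ρ • (1 : Matrix (Fin m) (Fin m) ℝ) -
        (ρ / (ω + ρ)) • (A * (Q + ((ω + ρ)⁻¹) • (Aᵀ * A))⁻¹ * Aᵀ))) :
    ∃ v : EuclideanSpace ℝ (Fin m),
      (∀ (lam : EuclideanSpace ℝ (Fin m)) (xk : EuclideanSpace ℝ (Fin n)),
        (∀ x, Ψ lam xk ≤ Ψ lam x) →
          lam - ((ω + ρ)⁻¹) • (c xk + ω • lam) = Matrix.toEuclideanCLM (𝕜 := ℝ) M lam + v) ∧
      ‖(Matrix.toEuclideanCLM (𝕜 := ℝ) M :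
          EuclideanSpace ℝ (Fin m) →L[ℝ] EuclideanSpace ℝ (Fin m))‖ ≤ ρ / (ω + ρ) ∧
      ρ / (ω + ρ) < 1 ∧
      ∃! lamstar : EuclideanSpace ℝ (Fin m),
        lamstar = Matrix.toEuclideanCLM (𝕜 := ℝ) M lamstar + v ∧
        ∀ lam0 : EuclideanSpace ℝ (Fin m),
          Tendsto (fun k => (fun l => Matrix.toEuclideanCLM (𝕜 := ℝ) M l + v)^[k] lam0)
            atTop (𝓝 lamstar) := by
  have hs : 0 < ω + ρ := by linarith
  have hs0 : ω + ρ ≠ 0 := ne_of_gt hs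
  obtain ⟨B, hBdef⟩ : ∃ B : Matrix (Fin n) (Fin n) ℝ,
      B = Q + ((ω + ρ)⁻¹) • (Aᵀ * A) := ⟨_, rfl⟩
  rw [← hBdef] at hM
  have hQsymT : Qᵀ = Q := hQsym
  have hBsym : Bᵀ = B := by
    rw [hBdef]
    simp [Matrix.transpose_add, Matrix.transpose_smul, Matrix.transpose_mul,
      Matrix.transpose_transpose, hQsymT]
  have hBform : ∀ x : Fin n → ℝ, B *ᵥ x = Q *ᵥ x + (ω + ρ)⁻¹ • (Aᵀ *ᵥ (A *ᵥ x)) := by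
    intro x
    rw [hBdef, Matrix.add_mulVec, Matrix.smul_mulVec, ← Matrix.mulVec_mulVec]
  have hATA : ∀ x : Fin n → ℝ,
      x ⬝ᵥ (B *ᵥ x) = x ⬝ᵥ (Q *ᵥ x) + (ω + ρ)⁻¹ * ((A *ᵥ x) ⬝ᵥ (A *ᵥ x)) := by
    intro x
    rw [hBform, dotProduct_add, dotProduct_smul, smul_eq_mul,
      dotProduct_comm x (Aᵀ *ᵥ (A *ᵥ x)), MALMAux.transpose_dot]
  have hstar : ∀ (j : ℕ) (x : Fin j → ℝ), star x = x := by
    intro j x; funext i; simp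
  have hQdot : ∀ x : Fin n → ℝ, 0 ≤ x ⬝ᵥ (Q *ᵥ x) := by
    intro x
    have := hQpd.posSemidef.dotProduct_mulVec_nonneg x
    rwa [hstar] at this
  have hBpd : B.PosDef := by
    refine Matrix.PosDef.of_dotProduct_mulVec_pos ?_ (fun x hx => ?_)
    · rw [Matrix.IsHermitian, Matrix.conjTranspose_eq_transpose_of_trivial, hBsym]
    · have h1 := hQpd.dotProduct_mulVec_pos hx
      rw [hstar] at h1
      rw [hstar, hATA]
      have h2 : 0 ≤ (ω + ρ)⁻¹ * ((A *ᵥ x) ⬝ᵥ (A *ᵥ x)) := by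
        have := MALMAux.dot_self_nonneg (A *ᵥ x)
        positivity
      linarith
  have hdet : IsUnit B.det := (Matrix.isUnit_iff_isUnit_det B).mp hBpd.isUnit
  have hBinv : B⁻¹ * B = 1 := Matrix.nonsing_inv_mul B hdet
  have hBinv' : B * B⁻¹ = 1 := Matrix.mul_nonsing_inv B hdet
  have hBinvsym : (B⁻¹)ᵀ = B⁻¹ := by rw [Matrix.transpose_nonsing_inv, hBsym]
  have hBinvpd : (B⁻¹).PosDef := hBpd.inv
  have hMsym : Mᵀ = M := by
    rw [hM]
    simp only [Matrix.transpose_smul, Matrix.transpose_sub, Matrix.transpose_one,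
      Matrix.transpose_mul, Matrix.transpose_transpose, Matrix.transpose_nonsing_inv, hBsym]
    rw [Matrix.mul_assoc]
  have hPbound : ∀ x : Fin m → ℝ,
      0 ≤ x ⬝ᵥ ((A * B⁻¹ * Aᵀ) *ᵥ x) ∧
        x ⬝ᵥ ((A * B⁻¹ * Aᵀ) *ᵥ x) ≤ (ω + ρ) * (x ⬝ᵥ x) := by
    intro x
    obtain ⟨z, hz⟩ : ∃ z, z = Aᵀ *ᵥ x := ⟨_, rfl⟩
    obtain ⟨u, hu⟩ : ∃ u, u = B⁻¹ *ᵥ z := ⟨_, rfl⟩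
    obtain ⟨w, hw⟩ : ∃ w, w = A *ᵥ u := ⟨_, rfl⟩
    have hPx : (A * B⁻¹ * Aᵀ) *ᵥ x = A *ᵥ u := by
      rw [hu, hz, ← Matrix.mulVec_mulVec, ← Matrix.mulVec_mulVec]
    have hxPx : x ⬝ᵥ ((A * B⁻¹ * Aᵀ) *ᵥ x) = z ⬝ᵥ u := by
      rw [hPx, ← MALMAux.transpose_dot, ← hz]
    have hγ0 : 0 ≤ z ⬝ᵥ u := by
      have := hBinvpd.posSemidef.dotProduct_mulVec_nonneg z
      rwa [hstar, ← hu] at this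
    have hBu : B *ᵥ u = z := by
      rw [hu, Matrix.mulVec_mulVec, hBinv', Matrix.one_mulVec]
    have hγB : z ⬝ᵥ u = u ⬝ᵥ (B *ᵥ u) := by
      rw [hBu]; exact dotProduct_comm z u
    have hγW : (ω + ρ)⁻¹ * (w ⬝ᵥ w) ≤ z ⬝ᵥ u := by
      rw [hγB, hATA, ← hw]
      have := hQdot u
      linarith
    have hγX : z ⬝ᵥ u = x ⬝ᵥ w := by
      rw [hw, ← MALMAux.transpose_dot, ← hz]
    refine ⟨hxPx ▸ hγ0, ?_⟩
    rw [hxPx]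
    rcases eq_or_lt_of_le hγ0 with h | h
    · rw [← h]
      exact mul_nonneg hs.le (MALMAux.dot_self_nonneg x)
    · by_contra hcon
      push_neg at hcon
      have hW : w ⬝ᵥ w ≤ (ω + ρ) * (z ⬝ᵥ u) := by
        have h5 := mul_le_mul_of_nonneg_left hγW hs.le
        rwa [← mul_assoc, mul_inv_cancel₀ hs0, one_mul] at h5
      have hCS := MALMAux.dot_CS x w
      rw [← hγX] at hCS
      nlinarith [MALMAux.dot_self_nonneg x, MALMAux.dot_self_nonneg w,
        mul_le_mul_of_nonneg_left hW (MALMAux.dot_self_nonneg x),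
        mul_lt_mul_of_pos_right hcon h]
  have hMform : ∀ x : Fin m → ℝ,
      x ⬝ᵥ (M *ᵥ x) = (ω + ρ)⁻¹ *
        (ρ * (x ⬝ᵥ x) - (ρ / (ω + ρ)) * (x ⬝ᵥ ((A * B⁻¹ * Aᵀ) *ᵥ x))) := by
    intro x
    rw [hM]
    rw [Matrix.smul_mulVec, Matrix.sub_mulVec, Matrix.smul_mulVec,
      Matrix.smul_mulVec, Matrix.one_mulVec]
    simp only [dotProduct_smul, dotProduct_sub, smul_eq_mul]
  have hnormT : ‖(Matrix.toEuclideanCLM (𝕜 := ℝ) M :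
      EuclideanSpace ℝ (Fin m) →L[ℝ] EuclideanSpace ℝ (Fin m))‖ ≤ ρ / (ω + ρ) := by
    refine MALMAux2.opnorm_le M hMsym (ρ / (ω + ρ)) (by positivity) (fun x => ?_) (fun x => ?_)
    · rw [hMform]
      have h1 := (hPbound x).2
      have h2 : 0 ≤ ρ / (ω + ρ) := by positivity
      have h3 := mul_le_mul_of_nonneg_left h1 h2
      have h4 : (ρ / (ω + ρ)) * ((ω + ρ) * (x ⬝ᵥ x)) = ρ * (x ⬝ᵥ x) := by
        field_simp
      have h5 : 0 ≤ (ω + ρ)⁻¹ := by positivity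
      nlinarith
    · rw [hMform]
      have h1 := (hPbound x).1
      have h2 : 0 ≤ ρ / (ω + ρ) := by positivity
      have h6 := MALMAux.dot_self_nonneg x
      have h5 : 0 ≤ (ω + ρ)⁻¹ := by positivity
      have h7 : (ω + ρ)⁻¹ * (ρ * (x ⬝ᵥ x) - (ρ / (ω + ρ)) * (x ⬝ᵥ ((A * B⁻¹ * Aᵀ) *ᵥ x)))
          ≤ (ω + ρ)⁻¹ * (ρ * (x ⬝ᵥ x)) := by
        nlinarith [mul_nonneg (mul_nonneg h5 h2) h1]
      have h8 : (ω + ρ)⁻¹ * (ρ * (x ⬝ᵥ x)) = (ρ / (ω + ρ)) * (x ⬝ᵥ x) := by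
        field_simp
      linarith
  refine ⟨(WithLp.equiv 2 (Fin m → ℝ)).symm ((ω + ρ)⁻¹ •
      (WithLp.equiv 2 (Fin m → ℝ) b + (A * B⁻¹) *ᵥ (WithLp.equiv 2 (Fin n → ℝ) q)
        - (ω + ρ)⁻¹ • ((A * B⁻¹ * Aᵀ) *ᵥ WithLp.equiv 2 (Fin m → ℝ) b))), ?_, ?_, ?_, ?_⟩
  · -- Part 1 : the affine recursion
    intro lam xk hmin
    obtain ⟨lam', hlam'⟩ : ∃ l, l = WithLp.equiv 2 (Fin m → ℝ) lam := ⟨_, rfl⟩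
    obtain ⟨b', hb'⟩ : ∃ l, l = WithLp.equiv 2 (Fin m → ℝ) b := ⟨_, rfl⟩
    obtain ⟨q', hq'⟩ : ∃ l, l = WithLp.equiv 2 (Fin n → ℝ) q := ⟨_, rfl⟩
    obtain ⟨xk', hxk'⟩ : ∃ l, l = WithLp.equiv 2 (Fin n → ℝ) xk := ⟨_, rfl⟩
    obtain ⟨r, hrdef⟩ : ∃ r : Fin n → ℝ,
        r = Q *ᵥ xk' + q' - Aᵀ *ᵥ lam' + (ω + ρ)⁻¹ • (Aᵀ *ᵥ (A *ᵥ xk' - b' + ω • lam')) :=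
      ⟨_, rfl⟩
    have hF : ∀ x : EuclideanSpace ℝ (Fin n), Ψ lam x =
        (1/2) * ((WithLp.equiv 2 (Fin n → ℝ) x) ⬝ᵥ (Q *ᵥ (WithLp.equiv 2 (Fin n → ℝ) x)))
        + q' ⬝ᵥ (WithLp.equiv 2 (Fin n → ℝ) x)
        - lam' ⬝ᵥ (A *ᵥ (WithLp.equiv 2 (Fin n → ℝ) x) - b')
        + (1/(2*(ω + ρ))) *
          ((A *ᵥ (WithLp.equiv 2 (Fin n → ℝ) x) - b' + ω • lam') ⬝ᵥ
            (A *ᵥ (WithLp.equiv 2 (Fin n → ℝ) x) - b' + ω • lam')) := by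
      intro x
      rw [hΨ, hf, hc, hlam', hq', hb']
      rw [MALMAux.dot_e, MALMAux.dot_e, MALMAux.dot_e, MALMAux.norm_sq_e]
      simp only [WithLp.equiv_apply, WithLp.ofLp_add, WithLp.ofLp_sub, WithLp.ofLp_smul,
        Matrix.ofLp_toEuclideanLin_apply, Matrix.toLin'_apply]
    have hquad : ∀ (t : ℝ) (y : Fin n → ℝ),
        0 ≤ (y ⬝ᵥ (B *ᵥ y)) * (t * t) / 2 + (r ⬝ᵥ y) * t := by
      intro t y
      have h0 := hmin ((WithLp.equiv 2 (Fin n → ℝ)).symm (xk' + t • y))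
      rw [hF, hF, Equiv.apply_symm_apply, ← hxk'] at h0
      have hexp :
          (1/2) * ((xk' + t • y) ⬝ᵥ (Q *ᵥ (xk' + t • y)))
          + q' ⬝ᵥ (xk' + t • y)
          - lam' ⬝ᵥ (A *ᵥ (xk' + t • y) - b')
          + (1/(2*(ω + ρ))) *
            ((A *ᵥ (xk' + t • y) - b' + ω • lam') ⬝ᵥ (A *ᵥ (xk' + t • y) - b' + ω • lam'))
          = ((1/2) * (xk' ⬝ᵥ (Q *ᵥ xk')) + q' ⬝ᵥ xk' - lam' ⬝ᵥ (A *ᵥ xk' - b')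
            + (1/(2*(ω + ρ))) *
              ((A *ᵥ xk' - b' + ω • lam') ⬝ᵥ (A *ᵥ xk' - b' + ω • lam')))
          + ((y ⬝ᵥ (B *ᵥ y)) * (t * t) / 2 + (r ⬝ᵥ y) * t) := by
        have hQflip : ∀ u w : Fin n → ℝ, (Q *ᵥ u) ⬝ᵥ w = u ⬝ᵥ (Q *ᵥ w) :=
          MALMAux2.sym_dot Q hQsymT
        have hAdot : ∀ (z : Fin m → ℝ) (w : Fin n → ℝ), (Aᵀ *ᵥ z) ⬝ᵥ w = z ⬝ᵥ (A *ᵥ w) :=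
          MALMAux.transpose_dot A
        have hc1 : (A *ᵥ y) ⬝ᵥ (A *ᵥ xk') = (A *ᵥ xk') ⬝ᵥ (A *ᵥ y) :=
          dotProduct_comm _ _
        have hc2 : (A *ᵥ y) ⬝ᵥ b' = b' ⬝ᵥ (A *ᵥ y) := dotProduct_comm _ _
        have hc3 : (A *ᵥ y) ⬝ᵥ lam' = lam' ⬝ᵥ (A *ᵥ y) := dotProduct_comm _ _
        have hc4 : y ⬝ᵥ (Q *ᵥ xk') = xk' ⬝ᵥ (Q *ᵥ y) := MALMAux2.sym_dot' Q hQsymT y xk'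
        rw [hATA, hrdef]
        simp only [Matrix.mulVec_add, Matrix.mulVec_sub, Matrix.mulVec_smul,
          add_dotProduct, sub_dotProduct, smul_dotProduct,
          dotProduct_add, dotProduct_sub, dotProduct_smul,
          smul_eq_mul, hAdot, hQflip, hc1, hc2, hc3, hc4]
        field_simp
        ring
      rw [hexp] at h0
      linarith
    have hrr : r ⬝ᵥ r = 0 := by
      have hd := discrim_le_zero (a := (r ⬝ᵥ (B *ᵥ r)) / 2) (b := r ⬝ᵥ r) (c := 0)
        (fun t => by have h := hquad t r; linarith)
      rw [discrim] at hd
      nlinarith [MALMAux.dot_self_nonneg r]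
    have hr0 : r = 0 := dotProduct_self_eq_zero.mp hrr
    have hBxk : B *ᵥ xk' = (ρ / (ω + ρ)) • (Aᵀ *ᵥ lam') + (ω + ρ)⁻¹ • (Aᵀ *ᵥ b') - q' := by
      funext i
      have h1 := congrFun (hrdef ▸ hr0) i
      simp only [Pi.add_apply, Pi.sub_apply, Pi.smul_apply, smul_eq_mul, Pi.zero_apply] at h1
      have h2 : (Aᵀ *ᵥ (A *ᵥ xk' - b' + ω • lam')) i
          = (Aᵀ *ᵥ (A *ᵥ xk')) i - (Aᵀ *ᵥ b') i + ω * (Aᵀ *ᵥ lam') i := by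
        rw [Matrix.mulVec_add, Matrix.mulVec_sub, Matrix.mulVec_smul]
        simp
      rw [h2] at h1
      have h3 := congrFun (hBform xk') i
      simp only [Pi.add_apply, Pi.smul_apply, smul_eq_mul] at h3
      simp only [Pi.add_apply, Pi.sub_apply, Pi.smul_apply, smul_eq_mul]
      rw [h3]
      field_simp at h1 ⊢
      linarith
    have hxkeq : xk' = B⁻¹ *ᵥ ((ρ / (ω + ρ)) • (Aᵀ *ᵥ lam') + (ω + ρ)⁻¹ • (Aᵀ *ᵥ b') - q') := by
      rw [← hBxk, Matrix.mulVec_mulVec, hBinv, Matrix.one_mulVec]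
    have hAxk : A *ᵥ xk' = (ρ / (ω + ρ)) • ((A * B⁻¹ * Aᵀ) *ᵥ lam')
        + (ω + ρ)⁻¹ • ((A * B⁻¹ * Aᵀ) *ᵥ b') - (A * B⁻¹) *ᵥ q' := by
      rw [hxkeq, Matrix.mulVec_mulVec]
      rw [Matrix.mulVec_sub, Matrix.mulVec_add, Matrix.mulVec_smul, Matrix.mulVec_smul,
        Matrix.mulVec_mulVec, Matrix.mulVec_mulVec]
    have hupdate : lam' - (ω + ρ)⁻¹ • (A *ᵥ xk' - b' + ω • lam')
        = M *ᵥ lam' + (ω + ρ)⁻¹ •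
          (b' + (A * B⁻¹) *ᵥ q' - (ω + ρ)⁻¹ • ((A * B⁻¹ * Aᵀ) *ᵥ b')) := by
      rw [hAxk, hM]
      rw [Matrix.smul_mulVec, Matrix.sub_mulVec, Matrix.smul_mulVec,
        Matrix.smul_mulVec, Matrix.one_mulVec]
      funext i
      simp only [Pi.add_apply, Pi.sub_apply, Pi.smul_apply, smul_eq_mul]
      field_simp
      ring
    apply (WithLp.equiv 2 (Fin m → ℝ)).injective
    simp only [WithLp.equiv_apply, WithLp.ofLp_sub, WithLp.ofLp_add, WithLp.ofLp_smul,
      Matrix.ofLp_toEuclideanCLM, Matrix.toLin'_apply, Equiv.apply_symm_apply, hc,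
      Matrix.ofLp_toEuclideanLin_apply, WithLp.equiv_symm_apply, WithLp.ofLp_toLp]
    rw [WithLp.equiv_apply] at hlam' hb' hq' hxk'
    rw [← hlam', ← hb', ← hq', ← hxk']
    exact hupdate
  · -- Part 2
    exact hnormT
  · -- Part 3
    rw [div_lt_one hs]; linarith
  · -- Part 4 : contraction and convergence
    exact MALMAux2.contract_aux M (ρ / (ω + ρ)) (by positivity)
      (by rw [div_lt_one hs]; linarith) hnormT _

end
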